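/- Let (A,B,C,D) be reciprocal with respect to an invertible symmetric G ∈ ℝⁿˣⁿ and signature matrix σ, i.e., GA = (GA)ᵀ, GB = Cᵀσ, σD = Dᵀσ. Let x : ℝ → ℝⁿ be differentiable and u, y : ℝ → ℝᵐ be such that ẋ(t) = Ax(t) + Bu(t) and y(t) = Cx(t) + Du(t) for all t ∈ ℝ. Then for all t, d/dt [x(t)ᵀ G x(−t)] = u(t)ᵀ σ y(−t) − y(t)ᵀ σ u(−t). -/

import Mathlib

open Matrix

/-- A signature matrix: a diagonal matrix with diagonal entries ±1. -/
def IsSignatureMatrix {m : ℕ} (σ : Matrix (Fin m) (Fin m) ℝ) : Prop :=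
  ∃ d : Fin m → ℝ, (∀ i, d i = 1 ∨ d i = -1) ∧ σ = Matrix.diagonal d

/-- Derivative of a pointwise dot product of two vector-valued functions. -/
theorem hasDerivAt_dot' {k : ℕ} {f g : ℝ → Fin k → ℝ} {f' g' : Fin k → ℝ} {t : ℝ}
    (hf : HasDerivAt f f' t) (hg : HasDerivAt g g' t) :
    HasDerivAt (fun s => f s ⬝ᵥ g s) (f' ⬝ᵥ g t + f t ⬝ᵥ g') t := by
  simp only [dotProduct]
  rw [Finset.sum_add_distrib.symm]
  exact HasDerivAt.fun_sum fun i _ =>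
    ((hasDerivAt_pi.1 hf i).mul (hasDerivAt_pi.1 hg i))

/-- Matrix-vector multiplication commutes with derivatives. -/
theorem hasDerivAt_mulVec' {k l : ℕ} (M : Matrix (Fin k) (Fin l) ℝ) {h : ℝ → Fin l → ℝ}
    {h' : Fin l → ℝ} {t : ℝ} (hh : HasDerivAt h h' t) :
    HasDerivAt (fun s => M *ᵥ h s) (M *ᵥ h') t := by
  rw [hasDerivAt_pi] at hh ⊢
  intro i
  simp only [mulVec, dotProduct]
  exact HasDerivAt.fun_sum fun j _ => (hh j).const_mul (M i j)

theorem mulVec_dot {k l : ℕ} (M : Matrix (Fin k) (Fin l) ℝ) (v : Fin l → ℝ) (w : Fin k → ℝ) :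
    (M *ᵥ v) ⬝ᵥ w = v ⬝ᵥ (Mᵀ *ᵥ w) := by
  rw [dotProduct_mulVec, vecMul_transpose]

/-- The key algebraic identity. -/
theorem reciprocal_algebra {n m : ℕ}
    (A : Matrix (Fin n) (Fin n) ℝ) (B : Matrix (Fin n) (Fin m) ℝ)
    (C : Matrix (Fin m) (Fin n) ℝ) (D : Matrix (Fin m) (Fin m) ℝ)
    (G : Matrix (Fin n) (Fin n) ℝ) (σ : Matrix (Fin m) (Fin m) ℝ)
    (hGsymm : G.IsSymm) (hσs : σᵀ = σ)
    (hrec₁ : G * A = (G * A)ᵀ) (hrec₂ : G * B = Cᵀ * σ) (hrec₃ : σ * D = Dᵀ * σ)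
    (v w : Fin n → ℝ) (p q : Fin m → ℝ) :
    (A *ᵥ v + B *ᵥ p) ⬝ᵥ (G *ᵥ w) + v ⬝ᵥ (G *ᵥ ((-1 : ℝ) • (A *ᵥ w + B *ᵥ q)))
      = p ⬝ᵥ (σ *ᵥ (C *ᵥ w + D *ᵥ q)) - (C *ᵥ v + D *ᵥ p) ⬝ᵥ (σ *ᵥ q) := by
  have hAG : Aᵀ * G = G * A := by
    rw [hrec₁]; rw [Matrix.transpose_mul, hGsymm.eq]
  have hBG : Bᵀ * G = σ * C := by
    have := congrArg Matrix.transpose hrec₂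
    rw [Matrix.transpose_mul, Matrix.transpose_mul, hGsymm.eq, transpose_transpose, hσs] at this
    exact this
  simp only [mulVec_smul, Matrix.mulVec_add, add_dotProduct, dotProduct_add, smul_add,
    dotProduct_smul, mulVec_dot, mulVec_mulVec, hAG, hBG, ← hrec₂, ← hrec₃, hσs, smul_eq_mul]
  ring

/-- For a system reciprocal with respect to `G` and `σ`, along any solution one has
`d/dt [x(t)ᵀ G x(−t)] = u(t)ᵀ σ y(−t) − y(t)ᵀ σ u(−t)`. -/
theorem reciprocal_bilinear_derivative {n m : ℕ}
    (A : Matrix (Fin n) (Fin n) ℝ) (B : Matrix (Fin n) (Fin m) ℝ)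
    (C : Matrix (Fin m) (Fin n) ℝ) (D : Matrix (Fin m) (Fin m) ℝ)
    (G : Matrix (Fin n) (Fin n) ℝ) (σ : Matrix (Fin m) (Fin m) ℝ)
    (hGsymm : G.IsSymm) (hGinv : IsUnit G) (hσ : IsSignatureMatrix σ)
    (hrec₁ : G * A = (G * A)ᵀ) (hrec₂ : G * B = Cᵀ * σ) (hrec₃ : σ * D = Dᵀ * σ)
    (x : ℝ → Fin n → ℝ) (u y : ℝ → Fin m → ℝ)
    (hx : ∀ t : ℝ, HasDerivAt x (A *ᵥ x t + B *ᵥ u t) t)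
    (hy : ∀ t : ℝ, y t = C *ᵥ x t + D *ᵥ u t) :
    ∀ t : ℝ, HasDerivAt (fun s => x s ⬝ᵥ (G *ᵥ x (-s)))
      (u t ⬝ᵥ (σ *ᵥ y (-t)) - y t ⬝ᵥ (σ *ᵥ u (-t))) t := by
  intro t
  have hσs : σᵀ = σ := by
    obtain ⟨d, -, rfl⟩ := hσ
    exact Matrix.diagonal_transpose d
  have hneg : HasDerivAt (fun s : ℝ => x (-s))
      ((-1 : ℝ) • (A *ᵥ x (-t) + B *ᵥ u (-t))) t :=
    (hx (-t)).scomp t (hasDerivAt_neg t)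
  have hG : HasDerivAt (fun s : ℝ => G *ᵥ x (-s))
      (G *ᵥ ((-1 : ℝ) • (A *ᵥ x (-t) + B *ᵥ u (-t)))) t :=
    hasDerivAt_mulVec' G hneg
  have hd := hasDerivAt_dot' (hx t) hG
  rw [reciprocal_algebra A B C D G σ hGsymm hσs hrec₁ hrec₂ hrec₃
    (x t) (x (-t)) (u t) (u (-t))] at hd
  rw [hy t, hy (-t)]
  exact hd
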